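/- The map h : Ξ → E given by h(η, ξ) = exp(−√3·(η + ξ) + i·ξ), where Ξ = {(η, ξ) ∈ ℝ² : −3π/2 < η ≤ π/2 and ξ < −η} and E = {v ∈ ℂ : |v| > 1}, is a continuous bijection from Ξ onto E. -/

import Mathlib

/-- The map `h(η, ξ) = exp(−√3(η + ξ) + iξ)`. -/
noncomputable def hfun (p : ℝ × ℝ) : ℂ :=
  Complex.exp ((-(Real.sqrt 3) * (p.1 + p.2) : ℝ) + Complex.I * (p.2 : ℂ))

/-- The trapezoid `Ξ = {(η, ξ) : −3π/2 < η ≤ π/2, ξ < −η}`. -/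
def Xi : Set (ℝ × ℝ) :=
  {p : ℝ × ℝ | -(3 * Real.pi / 2) < p.1 ∧ p.1 ≤ Real.pi / 2 ∧ p.2 < -p.1}

/-- `h` is a continuous bijection from `Ξ` onto `E = {v : |v| > 1}`. -/
theorem hfun_continuous_bijective :
    ContinuousOn hfun Xi ∧
    Set.BijOn hfun Xi {v : ℂ | 1 < ‖v‖} := by
  have h3 : (0:ℝ) < Real.sqrt 3 := Real.sqrt_pos.mpr (by norm_num)
  have hpi := Real.pi_pos
  refine ⟨?_, ?_, ?_, ?_⟩
  · apply Continuous.continuousOn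
    apply Complex.continuous_exp.comp
    continuity
  · -- MapsTo
    rintro ⟨η, ξ⟩ ⟨h1, h2, hlt⟩
    simp only [Set.mem_setOf_eq, hfun, Complex.norm_exp]
    have hre : ((((-(Real.sqrt 3) * (η + ξ) : ℝ)) : ℂ) + Complex.I * (ξ : ℂ)).re
        = -(Real.sqrt 3) * (η + ξ) := by simp
    rw [hre]
    have hpos : 0 < -(Real.sqrt 3) * (η + ξ) := by nlinarith
    linarith [Real.add_one_le_exp (-(Real.sqrt 3) * (η + ξ))]
  · -- InjOn
    rintro ⟨η₁, ξ₁⟩ ⟨ha1, ha2, ha3⟩ ⟨η₂, ξ₂⟩ ⟨hb1, hb2, hb3⟩ heq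
    simp only [hfun, Complex.exp_eq_exp_iff_exists_int] at heq
    obtain ⟨n, hn⟩ := heq
    have hre := congrArg Complex.re hn
    have him := congrArg Complex.im hn
    simp [Complex.add_re, Complex.add_im, Complex.mul_re, Complex.mul_im] at hre him
    -- hre : -√3*(η₁+ξ₁) = -√3*(η₂+ξ₂), him : ξ₁ = ξ₂ + n*2π
    have hsum : η₁ + ξ₁ = η₂ + ξ₂ := hre
    have hn0 : n = 0 := by
      have hx1 : (-1 : ℝ) < (n : ℝ) := by nlinarith
      have hx2 : ((n : ℝ)) < 1 := by nlinarith
      have : (-1 : ℤ) < n := by exact_mod_cast hx1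
      have : n < 1 := by exact_mod_cast hx2
      omega
    subst hn0
    simp at him
    have : η₁ = η₂ := by linarith
    simp_all
  · -- SurjOn
    rintro v hv
    have hr : 1 < ‖v‖ := hv
    have hr0 : 0 < ‖v‖ := by linarith
    set r := ‖v‖ with hrdef
    set θ := Complex.arg v with hθdef
    set s : ℝ := -(Real.log r) / Real.sqrt 3 with hsdef
    set k : ℤ := ⌈(s - θ - Real.pi/2)/(2*Real.pi)⌉ with hkdef
    set η : ℝ := s - θ - 2*Real.pi*k with hηdef
    set ξ : ℝ := θ + 2*Real.pi*k with hξdef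
    have hlogr : 0 < Real.log r := Real.log_pos hr
    have hs : s < 0 := by
      rw [hsdef]
      apply div_neg_of_neg_of_pos <;> linarith
    have hceil1 : (s - θ - Real.pi/2)/(2*Real.pi) ≤ (k:ℝ) := Int.le_ceil _
    have hceil2 : ((k:ℝ)) < (s - θ - Real.pi/2)/(2*Real.pi) + 1 := Int.ceil_lt_add_one _
    have h2pi : (0:ℝ) < 2*Real.pi := by linarith
    have hb1 : s - θ - Real.pi/2 ≤ 2*Real.pi*k := by
      have := (div_le_iff₀ h2pi).mp hceil1
      linarith
    have hb2 : 2*Real.pi*(k:ℝ) < s - θ - Real.pi/2 + 2*Real.pi := by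
      have h := mul_lt_mul_of_pos_left hceil2 h2pi
      have hx : 2*Real.pi * ((s - θ - Real.pi/2)/(2*Real.pi) + 1) = s - θ - Real.pi/2 + 2*Real.pi := by
        field_simp
      rw [hx] at h; linarith
    have hηξ : η + ξ = s := by rw [hηdef, hξdef]; ring
    refine ⟨(η, ξ), ⟨?_, ?_, ?_⟩, ?_⟩
    · simp only [hηdef]; linarith
    · simp only [hηdef]; linarith
    · show ξ < -η; linarith
    · show hfun (η, ξ) = v
      simp only [hfun]
      have e1 : (-(Real.sqrt 3) * (η + ξ) : ℝ) = Real.log r := by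
        rw [hηξ, hsdef]; field_simp
      rw [e1]
      have e2 : ((Real.log r : ℝ):ℂ) + Complex.I * (ξ:ℂ)
          = ((Real.log r : ℝ):ℂ) + (θ:ℝ)*Complex.I + (k:ℤ)*(2*(Real.pi:ℂ)*Complex.I) := by
        rw [hξdef]; push_cast; ring
      rw [e2, Complex.exp_add, Complex.exp_int_mul_two_pi_mul_I, mul_one, Complex.exp_add,
        ← Complex.ofReal_exp, Real.exp_log hr0]
      exact Complex.norm_mul_exp_arg_mul_I v
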